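/- Let A, B ∈ M_n(ℂ)⁺ with B of rank at most r ≤ n, and let φ : ℝ⁺ → ℝ⁺ be convex. Then, combining Lidskii's inequality with the rank constraint: Σ_{j=1}^{r} φ(λ_{n−j+1}(A) + λ_j(B)) + Σ_{j=r+1}^{n} φ(λ_{n−j+1}(A)) ≤ Σ_{j=1}^{n} φ(λ_j(A+B)), where λ_j(·) denotes the j-th largest eigenvalue. -/

import Mathlib

set_option maxRecDepth 10000
set_option maxHeartbeats 1000000


open Matrix
open scoped ComplexOrder
open Finset

/-- `lam` is the list of eigenvalues of the Hermitian matrix `A`, counting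
multiplicities, arranged in non-increasing order. -/
def IsOrderedSpectrum {m : ℕ} (A : Matrix (Fin m) (Fin m) ℂ) (hA : A.IsHermitian)
    (lam : Fin m → ℝ) : Prop :=
  Antitone lam ∧ ∃ σ : Equiv.Perm (Fin m), ∀ i, lam i = hA.eigenvalues (σ i)

namespace LidskiiAux

variable {n : ℕ}

noncomputable def qf (M : Matrix (Fin n) (Fin n) ℂ) (x : EuclideanSpace ℂ (Fin n)) : ℝ :=
  RCLike.re (inner (𝕜 := ℂ) x (Matrix.toEuclideanLin M x))

noncomputable def nsq (x : EuclideanSpace ℂ (Fin n)) : ℝ :=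
  RCLike.re (inner (𝕜 := ℂ) x x)

lemma nsq_nonneg (x : EuclideanSpace ℂ (Fin n)) : 0 ≤ nsq x :=
  inner_self_nonneg

lemma nsq_pos {x : EuclideanSpace ℂ (Fin n)} (hx : x ≠ 0) : 0 < nsq x := by
  rw [nsq, inner_self_eq_norm_mul_norm]
  have : 0 < ‖x‖ := norm_pos_iff.mpr hx
  positivity

lemma qf_add (M N : Matrix (Fin n) (Fin n) ℂ) (x : EuclideanSpace ℂ (Fin n)) :
    qf (M + N) x = qf M x + qf N x := by
  simp [qf, map_add, inner_add_right]

lemma qf_neg (M : Matrix (Fin n) (Fin n) ℂ) (x : EuclideanSpace ℂ (Fin n)) :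
    qf (-M) x = -qf M x := by
  simp [qf, map_neg, inner_neg_right]

lemma toEuclideanLin_smul_one (t : ℝ) (x : EuclideanSpace ℂ (Fin n)) :
    Matrix.toEuclideanLin ((t : ℂ) • (1 : Matrix (Fin n) (Fin n) ℂ)) x = (t : ℂ) • x := by
  ext i
  simp [Matrix.toEuclideanLin_apply, Matrix.smul_mulVec, Matrix.one_mulVec]

lemma qf_smul_one (t : ℝ) (x : EuclideanSpace ℂ (Fin n)) :
    qf ((t : ℂ) • (1 : Matrix (Fin n) (Fin n) ℂ)) x = t * nsq x := by
  rw [qf, toEuclideanLin_smul_one, inner_smul_right, nsq]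
  simp [RCLike.smul_re]

lemma qf_nonneg_of_posSemidef {P : Matrix (Fin n) (Fin n) ℂ} (hP : P.PosSemidef)
    (x : EuclideanSpace ℂ (Fin n)) : 0 ≤ qf P x := by
  rw [qf, EuclideanSpace.inner_eq_star_dotProduct]
  have h := hP.re_dotProduct_nonneg ((WithLp.equiv 2 (Fin n → ℂ)) x)
  have he : (WithLp.equiv 2 (Fin n → ℂ)) (Matrix.toEuclideanLin P x)
      = P *ᵥ ((WithLp.equiv 2 (Fin n → ℂ)) x) := by
    exact Matrix.ofLp_toEuclideanLin_apply P x
  rw [dotProduct_comm]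
  exact h


lemma toEuclideanLin_eigen {M : Matrix (Fin n) (Fin n) ℂ} (hM : M.IsHermitian) (j : Fin n) :
    Matrix.toEuclideanLin M (hM.eigenvectorBasis j)
      = (hM.eigenvalues j : ℂ) • hM.eigenvectorBasis j := by
  apply (WithLp.equiv 2 (Fin n → ℂ)).injective
  rw [WithLp.equiv_apply, WithLp.equiv_apply, Matrix.ofLp_toEuclideanLin_apply, WithLp.ofLp_smul]
  rw [hM.mulVec_eigenvectorBasis j, RCLike.real_smul_eq_coe_smul (K := ℂ)]
  rfl

lemma card_filter_lt (m : ℕ) (hm : m ≤ n) :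
    (univ.filter fun i : Fin n => (i : ℕ) < m).card = m := by
  have : (univ.filter fun i : Fin n => (i : ℕ) < m) = Finset.map (Fin.castLEEmb hm) univ := by
    ext j
    simp only [mem_filter, mem_univ, true_and, Finset.mem_map, Fin.castLEEmb_apply]
    constructor
    · intro hj; exact ⟨⟨(j : ℕ), hj⟩, by ext; simp⟩
    · rintro ⟨i, rfl⟩; simpa using i.2
  rw [this, Finset.card_map, card_univ, Fintype.card_fin]

lemma card_filter_le (k : Fin n) :
    (univ.filter fun i : Fin n => i ≤ k).card = (k : ℕ) + 1 := by
  have : (univ.filter fun i : Fin n => i ≤ k) = (univ.filter fun i : Fin n => (i : ℕ) < (k : ℕ) + 1) := by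
    ext j
    simp only [mem_filter, mem_univ, true_and, Fin.le_def]
    omega
  rw [this, card_filter_lt _ (by omega)]

lemma card_filter_ge (k : Fin n) :
    (univ.filter fun i : Fin n => k ≤ i).card = n - (k : ℕ) := by
  have h1 : (univ.filter fun i : Fin n => k ≤ i) = (univ.filter fun i : Fin n => ¬ ((i : ℕ) < (k : ℕ))) := by
    ext j
    simp only [mem_filter, mem_univ, true_and, Fin.le_def]
    omega
  have h2 := Finset.card_filter_add_card_filter_not (s := (univ : Finset (Fin n)))
    (p := fun i : Fin n => (i : ℕ) < (k : ℕ))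
  rw [h1]
  have h3 := card_filter_lt (k : ℕ) (le_of_lt k.2)
  have h4 : (univ : Finset (Fin n)).card = n := by simp
  omega

/-- The key span construction: for any finite set `s` of indices, there is a subspace of
dimension `s.card` on which the Rayleigh quotient of `M` is controlled by `lam` on `s`. -/
lemma exists_span {M : Matrix (Fin n) (Fin n) ℂ} (hM : M.IsHermitian) {lam : Fin n → ℝ}
    (hl : IsOrderedSpectrum M hM lam) (s : Finset (Fin n)) :
    ∃ V : Submodule ℂ (EuclideanSpace ℂ (Fin n)), Module.finrank ℂ V = s.card ∧
      ∀ x ∈ V, (∀ c : ℝ, (∀ i ∈ s, c ≤ lam i) → c * nsq x ≤ qf M x) ∧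
               (∀ c : ℝ, (∀ i ∈ s, lam i ≤ c) → qf M x ≤ c * nsq x) := by
  obtain ⟨σ, hσ⟩ := hl.2
  set u : {i // i ∈ s} → EuclideanSpace ℂ (Fin n) := fun i => hM.eigenvectorBasis (σ i.1) with hu
  have hinj : Function.Injective (fun i : {i // i ∈ s} => σ i.1) :=
    fun a b hab => Subtype.ext (σ.injective hab)
  have hon : Orthonormal ℂ u := hM.eigenvectorBasis.orthonormal.comp _ hinj
  refine ⟨Submodule.span ℂ (Set.range u), ?_, ?_⟩
  · rw [finrank_span_eq_card hon.linearIndependent, Fintype.card_coe]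
  · intro x hx
    obtain ⟨c, hc⟩ := (Submodule.mem_span_range_iff_exists_fun ℂ).mp hx
    have hMx : Matrix.toEuclideanLin M x = ∑ i : {i // i ∈ s}, (c i * (lam i.1 : ℂ)) • u i := by
      rw [← hc, map_sum]
      refine Finset.sum_congr rfl fun i _ => ?_
      rw [LinearMap.map_smul, hu]
      simp only
      rw [toEuclideanLin_eigen hM (σ i.1), smul_smul, ← hσ i.1]
    have hqf : qf M x = ∑ i : {i // i ∈ s}, Complex.normSq (c i) * lam i.1 := by
      rw [qf, hMx, ← hc, hon.inner_sum]
      rw [map_sum]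
      refine Finset.sum_congr rfl fun i _ => ?_
      rw [← mul_assoc]
      rw [show (starRingEnd ℂ) (c i) * c i = (Complex.normSq (c i) : ℂ) by
        rw [mul_comm, Complex.mul_conj]]
      rw [← Complex.ofReal_mul]
      exact Complex.ofReal_re _
    have hnsq : nsq x = ∑ i : {i // i ∈ s}, Complex.normSq (c i) := by
      rw [nsq, ← hc, hon.inner_sum, map_sum]
      refine Finset.sum_congr rfl fun i _ => ?_
      rw [show (starRingEnd ℂ) (c i) * c i = (Complex.normSq (c i) : ℂ) by
        rw [mul_comm, Complex.mul_conj]]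
      exact Complex.ofReal_re _
    constructor
    · intro cl hcl
      rw [hqf, hnsq, Finset.mul_sum]
      refine Finset.sum_le_sum fun i _ => ?_
      rw [mul_comm]
      exact mul_le_mul_of_nonneg_left (hcl i.1 i.2) (Complex.normSq_nonneg _)
    · intro cu hcu
      rw [hqf, hnsq, Finset.mul_sum]
      refine Finset.sum_le_sum fun i _ => ?_
      refine le_trans (mul_le_mul_of_nonneg_left (hcu i.1 i.2) (Complex.normSq_nonneg _)) ?_
      rw [mul_comm]

lemma exists_common (V W : Submodule ℂ (EuclideanSpace ℂ (Fin n)))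
    (h : n < Module.finrank ℂ V + Module.finrank ℂ W) :
    ∃ x, x ≠ 0 ∧ x ∈ V ∧ x ∈ W := by
  have hfull : Module.finrank ℂ (EuclideanSpace ℂ (Fin n)) = n := finrank_euclideanSpace_fin
  have hsum := Submodule.finrank_sup_add_finrank_inf_eq V W
  have hle : Module.finrank ℂ ↥(V ⊔ W) ≤ n := by
    have h2 := Submodule.finrank_le (V ⊔ W)
    rw [hfull] at h2
    exact h2
  have hpos : 0 < Module.finrank ℂ ↥(V ⊓ W) := by omega
  have hne : V ⊓ W ≠ ⊥ := by
    intro hbot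
    rw [hbot, finrank_bot] at hpos
    exact lt_irrefl 0 hpos
  obtain ⟨x, hx, hx0⟩ := Submodule.exists_mem_ne_zero_of_ne_bot hne
  exact ⟨x, hx0, (Submodule.mem_inf.mp hx).1, (Submodule.mem_inf.mp hx).2⟩


section Tools

variable {M : Matrix (Fin n) (Fin n) ℂ} {hM : M.IsHermitian} {lam : Fin n → ℝ}

lemma le_lam_of (hl : IsOrderedSpectrum M hM lam) (k : Fin n)
    (V : Submodule ℂ (EuclideanSpace ℂ (Fin n))) (hV : (k : ℕ) + 1 ≤ Module.finrank ℂ V)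
    {c : ℝ} (hb : ∀ x ∈ V, c * nsq x ≤ qf M x) : c ≤ lam k := by
  obtain ⟨W, hWrank, hW⟩ := exists_span hM hl (univ.filter fun i : Fin n => k ≤ i)
  rw [card_filter_ge] at hWrank
  obtain ⟨x, hx0, hxV, hxW⟩ := exists_common V W (by
    have := k.2
    omega)
  have h1 : c * nsq x ≤ qf M x := hb x hxV
  have h2 : qf M x ≤ lam k * nsq x :=
    (hW x hxW).2 (lam k) (fun i hi => hl.1 (by simpa using hi))
  have h3 : 0 < nsq x := nsq_pos hx0
  nlinarith

lemma lam_le_of (hl : IsOrderedSpectrum M hM lam) (k : Fin n)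
    (V : Submodule ℂ (EuclideanSpace ℂ (Fin n))) (hV : n - (k : ℕ) ≤ Module.finrank ℂ V)
    {c : ℝ} (hb : ∀ x ∈ V, qf M x ≤ c * nsq x) : lam k ≤ c := by
  obtain ⟨W, hWrank, hW⟩ := exists_span hM hl (univ.filter fun i : Fin n => i ≤ k)
  rw [card_filter_le] at hWrank
  obtain ⟨x, hx0, hxV, hxW⟩ := exists_common V W (by
    have := k.2
    omega)
  have h1 : qf M x ≤ c * nsq x := hb x hxV
  have h2 : lam k * nsq x ≤ qf M x :=
    (hW x hxW).1 (lam k) (fun i hi => hl.1 (by simpa using hi))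
  have h3 : 0 < nsq x := nsq_pos hx0
  nlinarith

lemma exists_high (hl : IsOrderedSpectrum M hM lam) (k : Fin n) :
    ∃ V : Submodule ℂ (EuclideanSpace ℂ (Fin n)), Module.finrank ℂ V = (k : ℕ) + 1 ∧
      ∀ x ∈ V, lam k * nsq x ≤ qf M x := by
  obtain ⟨V, hVrank, hV⟩ := exists_span hM hl (univ.filter fun i : Fin n => i ≤ k)
  rw [card_filter_le] at hVrank
  exact ⟨V, hVrank, fun x hx => (hV x hx).1 (lam k) (fun i hi => hl.1 (by simpa using hi))⟩

lemma exists_low (hl : IsOrderedSpectrum M hM lam) (k : Fin n) :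
    ∃ V : Submodule ℂ (EuclideanSpace ℂ (Fin n)), Module.finrank ℂ V = n - (k : ℕ) ∧
      ∀ x ∈ V, qf M x ≤ lam k * nsq x := by
  obtain ⟨V, hVrank, hV⟩ := exists_span hM hl (univ.filter fun i : Fin n => k ≤ i)
  rw [card_filter_ge] at hVrank
  exact ⟨V, hVrank, fun x hx => (hV x hx).2 (lam k) (fun i hi => hl.1 (by simpa using hi))⟩

end Tools

/-- Weyl monotonicity: adding a PSD matrix only increases ordered eigenvalues. -/
lemma lam_mono {X P XP : Matrix (Fin n) (Fin n) ℂ} (hXP : X + P = XP)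
    {hX : X.IsHermitian} {hXPh : XP.IsHermitian} (hP : P.PosSemidef)
    {lamX lamXP : Fin n → ℝ} (hlX : IsOrderedSpectrum X hX lamX)
    (hlXP : IsOrderedSpectrum XP hXPh lamXP) (k : Fin n) : lamX k ≤ lamXP k := by
  obtain ⟨V, hVrank, hV⟩ := exists_high hlX k
  refine le_lam_of hlXP k V (le_of_eq hVrank.symm) (fun x hx => ?_)
  have := qf_nonneg_of_posSemidef hP x
  have h2 := hV x hx
  rw [← hXP, qf_add]
  linarith

/-- Eigenvalues shift when adding a real multiple of the identity. -/
lemma lam_shift {X Xt : Matrix (Fin n) (Fin n) ℂ} {t : ℝ}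
    (hshift : X + (t : ℂ) • (1 : Matrix (Fin n) (Fin n) ℂ) = Xt)
    {hX : X.IsHermitian} {hXt : Xt.IsHermitian}
    {lamX lamXt : Fin n → ℝ} (hlX : IsOrderedSpectrum X hX lamX)
    (hlXt : IsOrderedSpectrum Xt hXt lamXt) (k : Fin n) : lamXt k = lamX k + t := by
  have key : ∀ x : EuclideanSpace ℂ (Fin n), qf Xt x = qf X x + t * nsq x := by
    intro x
    rw [← hshift, qf_add, qf_smul_one]
  apply le_antisymm
  · obtain ⟨V, hVrank, hV⟩ := exists_low hlX k
    refine lam_le_of hlXt k V (le_of_eq hVrank.symm) (fun x hx => ?_)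
    rw [key, add_mul]
    have := hV x hx
    linarith
  · obtain ⟨V, hVrank, hV⟩ := exists_high hlX k
    refine le_lam_of hlXt k V (le_of_eq hVrank.symm) (fun x hx => ?_)
    rw [key, add_mul]
    have := hV x hx
    linarith

/-- Eigenvalues of the negation, reversed. -/
lemma lam_neg {X N : Matrix (Fin n) (Fin n) ℂ} (hneg : -X = N)
    {hX : X.IsHermitian} {hN : N.IsHermitian}
    {lamX lamN : Fin n → ℝ} (hlX : IsOrderedSpectrum X hX lamX)
    (hlN : IsOrderedSpectrum N hN lamN) (k : Fin n) : lamN k = -(lamX k.rev) := by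
  have key : ∀ x : EuclideanSpace ℂ (Fin n), qf N x = -qf X x := by
    intro x
    rw [← hneg, qf_neg]
  have hrev : (k.rev : ℕ) = n - 1 - (k : ℕ) := by
    rw [Fin.val_rev]
    omega
  apply le_antisymm
  · obtain ⟨V, hVrank, hV⟩ := exists_high hlX k.rev
    refine lam_le_of hlN k V ?_ (fun x hx => ?_)
    · rw [hVrank, hrev]
      have := k.2
      omega
    · rw [key, neg_mul]
      have := hV x hx
      linarith
  · obtain ⟨V, hVrank, hV⟩ := exists_low hlX k.rev
    refine le_lam_of hlN k V ?_ (fun x hx => ?_)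
    · rw [hVrank, hrev]
      have := k.2
      omega
    · rw [key, neg_mul]
      have := hV x hx
      linarith

lemma trace_conj_unitary (U : Matrix.unitaryGroup (Fin n) ℂ) (D : Matrix (Fin n) (Fin n) ℂ) :
    Matrix.trace ((U : Matrix (Fin n) (Fin n) ℂ) * D * star (U : Matrix (Fin n) (Fin n) ℂ))
      = Matrix.trace D := by
  rw [Matrix.trace_mul_cycle]
  rw [show star (U : Matrix (Fin n) (Fin n) ℂ) * (U : Matrix (Fin n) (Fin n) ℂ) * D
      = (star (U : Matrix (Fin n) (Fin n) ℂ) * (U : Matrix (Fin n) (Fin n) ℂ)) * D from rfl]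
  rw [Matrix.mem_unitaryGroup_iff'.mp U.2, one_mul]

/-- The sum of an ordered spectrum is the (real part of the) trace. -/
lemma sum_lam_eq_trace {M : Matrix (Fin n) (Fin n) ℂ} (hM : M.IsHermitian)
    {lam : Fin n → ℝ} (hl : IsOrderedSpectrum M hM lam) :
    ∑ i, lam i = RCLike.re (Matrix.trace M) := by
  obtain ⟨σ, hσ⟩ := hl.2
  have h1 : ∑ i, lam i = ∑ i, hM.eigenvalues i := by
    rw [show (fun i => lam i) = fun i => hM.eigenvalues (σ i) from funext hσ]
    exact Equiv.sum_comp σ hM.eigenvalues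
  have h2 : Matrix.trace M = ∑ i, (hM.eigenvalues i : ℂ) := by
    conv_lhs => rw [hM.spectral_theorem]
    rw [Unitary.conjStarAlgAut_apply, trace_conj_unitary, Matrix.trace_diagonal]
    simp
  rw [h1, h2, map_sum]
  simp

/-- Every Hermitian matrix has an ordered spectrum. -/
lemma exists_ordered (M : Matrix (Fin n) (Fin n) ℂ) (hM : M.IsHermitian) :
    ∃ lam : Fin n → ℝ, IsOrderedSpectrum M hM lam := by
  set σ : Equiv.Perm (Fin n) := (Fin.revPerm).trans (Tuple.sort hM.eigenvalues) with hσ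
  refine ⟨fun k => hM.eigenvalues (σ k), ⟨?_, σ, fun i => rfl⟩⟩
  intro a b hab
  have := Tuple.monotone_sort hM.eigenvalues (show b.rev ≤ a.rev from Fin.rev_le_rev.mpr hab)
  simpa [hσ] using this

/-- Positive/negative part decomposition at level `t`. -/
lemma posneg_decomp {Y : Matrix (Fin n) (Fin n) ℂ} (hY : Y.IsHermitian)
    {lamY : Fin n → ℝ} (hl : IsOrderedSpectrum Y hY lamY) (t : ℝ) :
    ∃ P N : Matrix (Fin n) (Fin n) ℂ, P.PosSemidef ∧ N.PosSemidef ∧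
      Y = P - N + (t : ℂ) • 1 ∧
      RCLike.re (Matrix.trace P) = ∑ i, max (lamY i - t) 0 := by
  obtain ⟨σ, hσ⟩ := hl.2
  set U := hY.eigenvectorUnitary with hU
  set ev := hY.eigenvalues with hev
  set P := (U : Matrix (Fin n) (Fin n) ℂ) *
    Matrix.diagonal (fun i => ((max (ev i - t) 0 : ℝ) : ℂ)) * star (U : Matrix (Fin n) (Fin n) ℂ)
    with hP
  set N := (U : Matrix (Fin n) (Fin n) ℂ) *
    Matrix.diagonal (fun i => ((max (t - ev i) 0 : ℝ) : ℂ)) * star (U : Matrix (Fin n) (Fin n) ℂ)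
    with hN
  have hPsd : P.PosSemidef := by
    apply Matrix.PosSemidef.mul_mul_conjTranspose_same
    refine Matrix.posSemidef_diagonal_iff.mpr fun i => ?_
    rw [RCLike.nonneg_iff]
    constructor
    · simp [le_max_right]
    · simp
  have hNsd : N.PosSemidef := by
    apply Matrix.PosSemidef.mul_mul_conjTranspose_same
    refine Matrix.posSemidef_diagonal_iff.mpr fun i => ?_
    rw [RCLike.nonneg_iff]
    constructor
    · simp [le_max_right]
    · simp
  refine ⟨P, N, hPsd, hNsd, ?_, ?_⟩
  · have hPN : P - N = Y - (t : ℂ) • 1 := by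
      have hdiag : (Matrix.diagonal (fun i => ((max (ev i - t) 0 : ℝ) : ℂ)))
          - Matrix.diagonal (fun i => ((max (t - ev i) 0 : ℝ) : ℂ))
          = Matrix.diagonal (RCLike.ofReal ∘ ev) - (t : ℂ) • 1 := by
        ext i j
        by_cases hij : i = j
        · subst hij
          have hre : max (ev i - t) 0 - max (t - ev i) 0 = ev i - t := by
            rcases le_total (ev i) t with h | h
            · rw [max_eq_right (by linarith), max_eq_left (by linarith)]
              linarith
            · rw [max_eq_left (by linarith), max_eq_right (by linarith)]
              linarith
          simp only [Matrix.sub_apply, Matrix.diagonal_apply_eq, Matrix.smul_apply,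
            Matrix.one_apply_eq, Function.comp_apply, smul_eq_mul, mul_one]
          rw [← Complex.ofReal_sub, hre]
          exact Complex.ofReal_sub (ev i) t
        · simp [Matrix.diagonal_apply_ne _ hij, Matrix.one_apply_ne hij]
      rw [hP, hN, ← Matrix.sub_mul, ← Matrix.mul_sub, hdiag, Matrix.mul_sub, Matrix.sub_mul]
      congr 1
      · exact (hY.spectral_theorem).symm
      · rw [mul_smul_comm, Matrix.mul_one, smul_mul_assoc, Matrix.mem_unitaryGroup_iff.mp U.2]
    rw [hPN]
    abel
  · rw [hP, trace_conj_unitary, Matrix.trace_diagonal]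
    rw [map_sum]
    have : ∀ i, RCLike.re ((max (ev i - t) 0 : ℝ) : ℂ) = max (ev i - t) 0 := fun i =>
      Complex.ofReal_re _
    rw [Finset.sum_congr rfl (fun i _ => this i)]
    have hperm : ∑ i, max (lamY i - t) 0 = ∑ i, max (ev (σ i) - t) 0 := by
      refine Finset.sum_congr rfl fun i _ => ?_
      rw [hσ i]
    rw [hperm]
    exact (Equiv.sum_comp σ (fun j => max (ev j - t) 0)).symm


lemma isHermitian_smul_one (t : ℝ) :
    ((t : ℂ) • (1 : Matrix (Fin n) (Fin n) ℂ)).IsHermitian := by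
  unfold Matrix.IsHermitian
  rw [Matrix.conjTranspose_smul, Matrix.conjTranspose_one]
  congr 1
  exact Complex.conj_ofReal t

/-- Lidskii–Wielandt inequality (index form). -/
theorem lidskii_wielandt {X Y Z : Matrix (Fin n) (Fin n) ℂ} (hXYZ : X + Y = Z)
    {hX : X.IsHermitian} {hY : Y.IsHermitian} {hZ : Z.IsHermitian}
    {lamX lamY lamZ : Fin n → ℝ}
    (hlX : IsOrderedSpectrum X hX lamX) (hlY : IsOrderedSpectrum Y hY lamY)
    (hlZ : IsOrderedSpectrum Z hZ lamZ) (S : Finset (Fin n)) :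
    ∑ i ∈ S, lamZ i ≤ ∑ i ∈ S, lamX i
      + ∑ j ∈ univ.filter (fun j : Fin n => (j : ℕ) < S.card), lamY j := by
  rcases S.eq_empty_or_nonempty with rfl | hS
  · simp
  have hm1 : 1 ≤ S.card := Finset.card_pos.mpr hS
  have hmn : S.card ≤ n := by simpa using Finset.card_le_univ S
  set m := S.card with hm
  have hkm : m - 1 < n := by omega
  set km : Fin n := ⟨m - 1, hkm⟩ with hkmdef
  set t := lamY km with ht
  obtain ⟨P, N, hPsd, hNsd, hYdec, htr⟩ := posneg_decomp hY hlY t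
  set W := X + (t : ℂ) • 1 + P with hW
  set Xt := X + (t : ℂ) • 1 with hXt
  have hXth : Xt.IsHermitian := hX.add (isHermitian_smul_one t)
  have hWh : W.IsHermitian := hXth.add hPsd.1
  obtain ⟨lamW, hlW⟩ := exists_ordered W hWh
  obtain ⟨lamXt, hlXt⟩ := exists_ordered Xt hXth
  -- Z + N = W
  have hZN : Z + N = W := by
    rw [← hXYZ, hYdec, hW, hXt]
    abel
  -- (1) lamZ ≤ lamW pointwise
  have h1 : ∀ i, lamZ i ≤ lamW i := fun i => lam_mono hZN hNsd hlZ hlW i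
  -- (2) lamXt ≤ lamW pointwise
  have h2 : ∀ i, lamXt i ≤ lamW i := fun i => lam_mono rfl hPsd hlXt hlW i
  -- (3) shift
  have h3 : ∀ i, lamXt i = lamX i + t := fun i => lam_shift rfl hlX hlXt i
  -- subset sum bound
  have h4 : ∑ i ∈ S, (lamW i - lamXt i) ≤ ∑ i, (lamW i - lamXt i) :=
    Finset.sum_le_sum_of_subset_of_nonneg (Finset.subset_univ S)
      (fun i _ _ => by linarith [h2 i])
  have h5 : ∑ i, (lamW i - lamXt i) = RCLike.re (Matrix.trace P) := by
    rw [Finset.sum_sub_distrib, sum_lam_eq_trace hWh hlW, sum_lam_eq_trace hXth hlXt]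
    have : Matrix.trace W = Matrix.trace Xt + Matrix.trace P := by
      rw [hW, hXt, Matrix.trace_add]
    rw [this, map_add]
    ring
  -- computing the trace of P
  have h6 : RCLike.re (Matrix.trace P)
      = ∑ j ∈ univ.filter (fun j : Fin n => (j : ℕ) < m), (lamY j - t) := by
    rw [htr]
    rw [← Finset.sum_filter_add_sum_filter_not univ (fun j : Fin n => (j : ℕ) < m)
      (fun i => max (lamY i - t) 0)]
    have ha : ∀ j ∈ univ.filter (fun j : Fin n => (j : ℕ) < m),
        max (lamY j - t) 0 = lamY j - t := by
      intro j hj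
      simp only [mem_filter, mem_univ, true_and] at hj
      have : j ≤ km := by
        rw [Fin.le_def]
        simp [hkmdef]
        omega
      have := hlY.1 this
      rw [max_eq_left]
      linarith
    have hb : ∀ j ∈ univ.filter (fun j : Fin n => ¬ ((j : ℕ) < m)),
        max (lamY j - t) 0 = 0 := by
      intro j hj
      simp only [mem_filter, mem_univ, true_and] at hj
      have : km ≤ j := by
        rw [Fin.le_def]
        simp [hkmdef]
        omega
      have := hlY.1 this
      rw [max_eq_right]
      linarith
    rw [Finset.sum_congr rfl ha, Finset.sum_congr rfl hb]
    simp
  -- assemble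
  have hcard : (univ.filter (fun j : Fin n => (j : ℕ) < m)).card = m := card_filter_lt m hmn
  have h7 : ∑ i ∈ S, lamZ i ≤ ∑ i ∈ S, lamW i := Finset.sum_le_sum (fun i _ => h1 i)
  have h8 : ∑ i ∈ S, lamXt i = ∑ i ∈ S, lamX i + m * t := by
    rw [Finset.sum_congr rfl (fun i _ => h3 i), Finset.sum_add_distrib]
    simp [hm]
  have h9 : ∑ j ∈ univ.filter (fun j : Fin n => (j : ℕ) < m), (lamY j - t)
      = ∑ j ∈ univ.filter (fun j : Fin n => (j : ℕ) < m), lamY j - m * t := by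
    rw [Finset.sum_sub_distrib, Finset.sum_const, hcard, nsmul_eq_mul]
  have h10 : ∑ i ∈ S, (lamW i - lamXt i) = ∑ i ∈ S, lamW i - ∑ i ∈ S, lamXt i :=
    Finset.sum_sub_distrib _ _
  linarith

lemma ordered_neg {A NA : Matrix (Fin n) (Fin n) ℂ} (hna : -A = NA) {hA : A.IsHermitian}
    {hNA : NA.IsHermitian} {lamA : Fin n → ℝ} (hlA : IsOrderedSpectrum A hA lamA) :
    IsOrderedSpectrum NA hNA (fun i => -(lamA i.rev)) := by
  obtain ⟨lamN, hlN⟩ := exists_ordered NA hNA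
  have : (fun i : Fin n => -(lamA i.rev)) = lamN := by
    funext i
    rw [lam_neg hna hlA hlN i]
  rw [this]
  exact hlN

/-- The subset form of Lidskii's inequality that we need. -/
theorem lidskii_subset {A B : Matrix (Fin n) (Fin n) ℂ} (hA : A.IsHermitian)
    (hB : B.IsHermitian) (hAB : (A + B).IsHermitian)
    {lamA lamB lamAB : Fin n → ℝ}
    (hlA : IsOrderedSpectrum A hA lamA) (hlB : IsOrderedSpectrum B hB lamB)
    (hlAB : IsOrderedSpectrum (A + B) hAB lamAB) (S : Finset (Fin n)) :
    ∑ i ∈ S, (lamA i.rev + lamB i)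
      ≤ ∑ j ∈ univ.filter (fun j : Fin n => (j : ℕ) < S.card), lamAB j := by
  have hnh : (-A).IsHermitian := hA.neg
  have hlNA : IsOrderedSpectrum (-A) hnh (fun i => -(lamA i.rev)) := ordered_neg rfl hlA
  have heq : -A + (A + B) = B := by abel
  have := lidskii_wielandt heq hlNA hlAB hlB S
  rw [Finset.sum_add_distrib]
  have h2 : ∑ i ∈ S, (-(lamA i.rev)) = -∑ i ∈ S, lamA i.rev := by
    rw [Finset.sum_neg_distrib]
  linarith [this, h2.le]


section HLP

lemma slope_mono_of_convex {φ : ℝ → ℝ} (hφ : ConvexOn ℝ (Set.Ici 0) φ) {a b a' b' : ℝ}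
    (ha : 0 ≤ a) (ha' : 0 ≤ a') (hab : a < b) (hab' : a' < b') (haa : a ≤ a') (hbb : b ≤ b') :
    (φ b - φ a) / (b - a) ≤ (φ b' - φ a') / (b' - a') := by
  have hb : (0:ℝ) ≤ b := le_trans ha hab.le
  have hb' : (0:ℝ) ≤ b' := le_trans ha' hab'.le
  have h1 : (φ b - φ a) / (b - a) ≤ (φ b' - φ a) / (b' - a) := by
    rcases eq_or_lt_of_le hbb with rfl | hlt
    · exact le_refl _
    · exact hφ.secant_mono (Set.mem_Ici.mpr ha) (Set.mem_Ici.mpr hb) (Set.mem_Ici.mpr hb')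
        hab.ne' (lt_of_lt_of_le hab hbb).ne' hbb
  have h2 : (φ b' - φ a) / (b' - a) ≤ (φ b' - φ a') / (b' - a') := by
    have := hφ.secant_mono (Set.mem_Ici.mpr hb') (Set.mem_Ici.mpr ha) (Set.mem_Ici.mpr ha')
      (lt_of_lt_of_le hab hbb).ne hab'.ne haa
    have e1 : (φ a - φ b') / (a - b') = (φ b' - φ a) / (b' - a) := by
      rw [← neg_div_neg_eq, neg_sub, neg_sub]
    have e2 : (φ a' - φ b') / (a' - b') = (φ b' - φ a') / (b' - a') := by
      rw [← neg_div_neg_eq, neg_sub, neg_sub]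
    rw [e1, e2] at this
    exact this
  linarith

lemma filter_lt_succ_eq_insert {N : ℕ} (k : ℕ) (hk : k < N) :
    (univ.filter fun j : Fin N => (j : ℕ) < k + 1)
      = insert (⟨k, hk⟩ : Fin N) (univ.filter fun j : Fin N => (j : ℕ) < k) := by
  ext j
  simp only [mem_filter, mem_univ, true_and, Finset.mem_insert, Fin.ext_iff]
  omega

/-- Hardy–Littlewood–Pólya: majorization plus convexity gives the sum inequality. -/
lemma hlp {N : ℕ} {φ : ℝ → ℝ} (hφ : ConvexOn ℝ (Set.Ici 0) φ)
    (w c : Fin N → ℝ) (hw : Antitone w) (hc : Antitone c)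
    (hw0 : ∀ i, 0 ≤ w i) (hc0 : ∀ i, 0 ≤ c i)
    (hpart : ∀ k : ℕ, k ≤ N → ∑ j ∈ univ.filter (fun j : Fin N => (j : ℕ) < k), w j
        ≤ ∑ j ∈ univ.filter (fun j : Fin N => (j : ℕ) < k), c j)
    (htot : ∑ j, w j = ∑ j, c j) :
    ∑ j, φ (w j) ≤ ∑ j, φ (c j) := by
  rcases Nat.eq_zero_or_pos N with rfl | hN
  · simp
  set a : Fin N → ℝ := fun i => min (w i) (c i) with haf
  set b : Fin N → ℝ := fun i => max (w i) (c i) with hbf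
  set sl : Fin N → ℝ := fun i => (φ (b i) - φ (a i)) / (b i - a i) with hslf
  have : Nonempty (Fin N) := ⟨⟨0, hN⟩⟩
  have himg : (univ.image sl).Nonempty := by
    apply Finset.image_nonempty.mpr
    exact Finset.univ_nonempty
  set dflt : ℝ := (univ.image sl).max' himg with hdflt
  set g : Fin N → ℝ := fun i =>
    (insert dflt (((univ.filter fun j : Fin N => j ≤ i ∧ w j ≠ c j)).image sl)).min'
      (Finset.insert_nonempty _ _) with hgf
  have ha0 : ∀ i, 0 ≤ a i := fun i => le_min (hw0 i) (hc0 i)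
  have haA : Antitone a := fun i j hij => min_le_min (hw hij) (hc hij)
  have hbA : Antitone b := fun i j hij => max_le_max (hw hij) (hc hij)
  have gmono : Antitone g := by
    intro i j hij
    apply Finset.min'_subset
    apply Finset.insert_subset_insert
    apply Finset.image_subset_image
    intro x hx
    simp only [mem_filter, mem_univ, true_and] at hx ⊢
    exact ⟨le_trans hx.1 hij, hx.2⟩
  have key : ∀ i, g i * (c i - w i) ≤ φ (c i) - φ (w i) := by
    intro i
    rcases lt_trichotomy (w i) (c i) with hlt | heq | hgt
    · -- w i < c i : a i = w i, b i = c i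
      have hai : a i = w i := min_eq_left hlt.le
      have hbi : b i = c i := max_eq_right hlt.le
      have hmem : sl i ∈ insert dflt
          (((univ.filter fun j : Fin N => j ≤ i ∧ w j ≠ c j)).image sl) := by
        apply Finset.mem_insert_of_mem
        apply Finset.mem_image_of_mem
        simp [hlt.ne]
      have hgle : g i ≤ sl i := Finset.min'_le _ _ hmem
      have hsl : sl i * (c i - w i) = φ (c i) - φ (w i) := by
        rw [hslf]
        simp only
        rw [hai, hbi, div_mul_cancel₀]
        exact sub_ne_zero.mpr hlt.ne'
      nlinarith [hgle, hlt]
    · rw [heq]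
      simp
    · -- c i < w i : a i = c i, b i = w i
      have hai : a i = c i := min_eq_right hgt.le
      have hbi : b i = w i := max_eq_left hgt.le
      have hgge : sl i ≤ g i := by
        apply Finset.le_min'
        intro y hy
        rcases Finset.mem_insert.mp hy with rfl | hy
        · exact Finset.le_max' _ _ (Finset.mem_image_of_mem sl (Finset.mem_univ i))
        · obtain ⟨j, hj, rfl⟩ := Finset.mem_image.mp hy
          simp only [mem_filter, mem_univ, true_and] at hj
          have hj1 : j ≤ i := hj.1
          have habi : a i < b i := min_lt_max.mpr (ne_of_gt hgt)
          have habj : a j < b j := min_lt_max.mpr hj.2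
          exact slope_mono_of_convex hφ (ha0 i) (ha0 j) habi habj (haA hj1) (hbA hj1)
      have hsl : sl i * (c i - w i) = φ (c i) - φ (w i) := by
        rw [hslf]
        simp only
        rw [hai, hbi]
        rw [show φ (w i) - φ (c i) = -(φ (c i) - φ (w i)) by ring,
          show w i - c i = -(c i - w i) by ring, neg_div_neg_eq, div_mul_cancel₀]
        exact sub_ne_zero.mpr (ne_of_lt hgt)
      nlinarith [hgge, hgt]
  -- Abel summation
  set d : Fin N → ℝ := fun i => c i - w i with hdf
  have hDpos : ∀ k : ℕ, k ≤ N →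
      0 ≤ ∑ j ∈ univ.filter (fun j : Fin N => (j : ℕ) < k), d j := by
    intro k hk
    have := hpart k hk
    rw [hdf]
    rw [Finset.sum_sub_distrib]
    linarith
  have claim : ∀ k : ℕ, (hk : k ≤ N) → (h1 : 1 ≤ k) →
      g ⟨k - 1, by omega⟩ * ∑ j ∈ univ.filter (fun j : Fin N => (j : ℕ) < k), d j
        ≤ ∑ j ∈ univ.filter (fun j : Fin N => (j : ℕ) < k), g j * d j := by
    intro k
    induction k with
    | zero => omega
    | succ k ih =>
      intro hk h1
      rcases Nat.eq_zero_or_pos k with rfl | hkpos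
      · rw [filter_lt_succ_eq_insert 0 (by omega)]
        have : (univ.filter fun j : Fin N => (j : ℕ) < 0) = ∅ := by
          ext j
          simp
        rw [this]
        simp
      · have hkN : k < N := by omega
        have hins := filter_lt_succ_eq_insert k hkN
        have hnotmem : (⟨k, hkN⟩ : Fin N) ∉ (univ.filter fun j : Fin N => (j : ℕ) < k) := by
          simp
        have ihh := ih (by omega) (by omega)
        have hgle : g ⟨k, by omega⟩ ≤ g ⟨k - 1, by omega⟩ := by
          apply gmono
          rw [Fin.le_def]
          simp
        have hDk := hDpos k (by omega)
        rw [hins, Finset.sum_insert hnotmem, Finset.sum_insert hnotmem]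
        have : g ⟨k, hkN⟩ * (d ⟨k, hkN⟩ + ∑ j ∈ univ.filter (fun j : Fin N => (j : ℕ) < k), d j)
            ≤ g ⟨k, hkN⟩ * d ⟨k, hkN⟩
              + ∑ j ∈ univ.filter (fun j : Fin N => (j : ℕ) < k), g j * d j := by
          nlinarith [ihh, hgle, hDk]
        have hfin : (⟨k + 1 - 1, by omega⟩ : Fin N) = (⟨k, hkN⟩ : Fin N) := by
          apply Fin.ext
          simp
        rw [hfin]
        exact this
  -- conclude
  have hTN : (univ.filter fun j : Fin N => (j : ℕ) < N) = univ := by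
    ext j
    simp [j.2]
  have hDN : ∑ j ∈ univ.filter (fun j : Fin N => (j : ℕ) < N), d j = 0 := by
    rw [hTN, hdf]
    rw [Finset.sum_sub_distrib]
    linarith [htot]
  have hmain := claim N (le_refl N) hN
  rw [hDN, mul_zero, hTN] at hmain
  have hsum : (0:ℝ) ≤ ∑ j, (φ (c j) - φ (w j)) := by
    have h2 : ∑ j, g j * d j ≤ ∑ j, (φ (c j) - φ (w j)) :=
      Finset.sum_le_sum (fun j _ => key j)
    linarith
  rw [Finset.sum_sub_distrib] at hsum
  linarith

end HLP


lemma lam_nonneg {A : Matrix (Fin n) (Fin n) ℂ} (hA : A.PosSemidef) {lam : Fin n → ℝ}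
    (hl : IsOrderedSpectrum A hA.1 lam) (i : Fin n) : 0 ≤ lam i := by
  obtain ⟨σ, hσ⟩ := hl.2
  rw [hσ i]
  exact hA.eigenvalues_nonneg (σ i)

lemma lam_eq_zero_of_rank_le {B : Matrix (Fin n) (Fin n) ℂ} (hB : B.PosSemidef)
    {lamB : Fin n → ℝ} (hl : IsOrderedSpectrum B hB.1 lamB) {r : ℕ} (hrk : B.rank ≤ r)
    (i : Fin n) (hi : r ≤ (i : ℕ)) : lamB i = 0 := by
  by_contra hne
  have hpos : 0 < lamB i := lt_of_le_of_ne (lam_nonneg hB hl i) (Ne.symm hne)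
  obtain ⟨σ, hσ⟩ := hl.2
  have hcard := hB.1.rank_eq_card_non_zero_eigs
  let f : {j : Fin n // j ≤ i} → {j : Fin n // hB.1.eigenvalues j ≠ 0} := fun j =>
    ⟨σ j.1, by
      have h2 : lamB i ≤ lamB j.1 := hl.1 j.2
      have h3 : 0 < hB.1.eigenvalues (σ j.1) := by
        rw [← hσ j.1]
        linarith
      exact ne_of_gt h3⟩
  have hfinj : Function.Injective f := by
    intro x y hxy
    have h6 : σ x.1 = σ y.1 := congrArg Subtype.val hxy
    exact Subtype.ext (σ.injective h6)
  have h4 := Fintype.card_le_of_injective f hfinj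
  have h5 : Fintype.card {j : Fin n // j ≤ i} = (i : ℕ) + 1 := by
    rw [Fintype.card_subtype]
    exact card_filter_le i
  rw [h5] at h4
  rw [hcard] at hrk
  omega

end LidskiiAux


open LidskiiAux in
/-- Lidskii's inequality combined with a rank constraint:
`Σ_{j=1}^{r} φ(λ_{n−j+1}(A) + λ_j(B)) + Σ_{j=r+1}^{n} φ(λ_{n−j+1}(A))
  ≤ Σ_{j=1}^{n} φ(λ_j(A+B))`. -/
theorem lidskii_rank_convex {n r : ℕ} (hr : r ≤ n)
    (A B : Matrix (Fin n) (Fin n) ℂ) (hA : A.PosSemidef) (hB : B.PosSemidef)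
    (hrk : B.rank ≤ r)
    (φ : ℝ → ℝ) (hφ : ConvexOn ℝ (Set.Ici 0) φ) (hφ0 : ∀ t, 0 ≤ t → 0 ≤ φ t)
    (lamA lamB lamAB : Fin n → ℝ)
    (hlA : IsOrderedSpectrum A hA.1 lamA)
    (hlB : IsOrderedSpectrum B hB.1 lamB)
    (hlAB : IsOrderedSpectrum (A + B) (hA.add hB).1 lamAB) :
    ∑ j : Fin n, φ (lamA j.rev + if (j : ℕ) < r then lamB j else 0)
      ≤ ∑ j : Fin n, φ (lamAB j) := by
  classical
  set v : Fin n → ℝ := fun j => lamA j.rev + lamB j with hv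
  have hLHS : ∑ j : Fin n, φ (lamA j.rev + if (j : ℕ) < r then lamB j else 0)
      = ∑ j : Fin n, φ (v j) := by
    refine Finset.sum_congr rfl fun j _ => ?_
    by_cases h : (j : ℕ) < r
    · rw [if_pos h]
    · rw [if_neg h, show v j = lamA j.rev + lamB j from rfl,
        lam_eq_zero_of_rank_le hB hlB hrk j (by omega)]
  rw [hLHS]
  set π : Equiv.Perm (Fin n) := Fin.revPerm.trans (Tuple.sort v) with hπ
  set w : Fin n → ℝ := fun k => v (π k) with hw
  have hwA : Antitone w := by
    intro k l hkl
    have := Tuple.monotone_sort v (show l.rev ≤ k.rev from Fin.rev_le_rev.mpr hkl)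
    simpa [hw, hπ] using this
  have hsum_phi : ∑ j : Fin n, φ (v j) = ∑ j : Fin n, φ (w j) :=
    (Equiv.sum_comp π (fun j => φ (v j))).symm
  rw [hsum_phi]
  have hv0 : ∀ j, 0 ≤ v j :=
    fun j => add_nonneg (lam_nonneg hA hlA j.rev) (lam_nonneg hB hlB j)
  -- partial sums
  have hpart : ∀ k : ℕ, k ≤ n → ∑ j ∈ univ.filter (fun j : Fin n => (j : ℕ) < k), w j
      ≤ ∑ j ∈ univ.filter (fun j : Fin n => (j : ℕ) < k), lamAB j := by
    intro k hk
    set T := univ.filter (fun j : Fin n => (j : ℕ) < k) with hT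
    set S := T.image π with hS
    have hsum : ∑ j ∈ T, w j = ∑ i ∈ S, v i := by
      rw [hS]
      rw [Finset.sum_image (fun x _ y _ hxy => π.injective hxy)]
    have hScard : S.card = k := by
      rw [hS, Finset.card_image_of_injective _ π.injective, hT, card_filter_lt k hk]
    have hlid := lidskii_subset hA.1 hB.1 (hA.add hB).1 hlA hlB hlAB S
    rw [hScard] at hlid
    rw [hsum]
    exact hlid
  -- total sums
  have htot : ∑ j, w j = ∑ j, lamAB j := by
    have h1 : ∑ j, w j = ∑ j, v j := Equiv.sum_comp π v
    have h2 : ∑ j : Fin n, lamA j.rev = ∑ j, lamA j := by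
      rw [show (fun j : Fin n => lamA j.rev) = fun j : Fin n => lamA (Fin.revPerm j) from rfl]
      exact Equiv.sum_comp Fin.revPerm lamA
    have h3 : ∑ j, v j = ∑ j, lamA j + ∑ j, lamB j := by
      rw [hv, Finset.sum_add_distrib, h2]
    have h4 := sum_lam_eq_trace hA.1 hlA
    have h5 := sum_lam_eq_trace hB.1 hlB
    have h6 := sum_lam_eq_trace (hA.add hB).1 hlAB
    rw [Matrix.trace_add, map_add] at h6
    rw [h1, h3, h4, h5, h6]
  exact hlp hφ w lamAB hwA hlAB.1 (fun i => hv0 (π i)) (fun i => lam_nonneg (hA.add hB) hlAB i)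
    hpart htot
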